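/- Let N ≥ 4 be an integer divisible by 4. For every integer n with 0 ≤ n ≤ N/2 − 1, one has ∑_{s=1}^{N/4} [(4n/N − 1) + cos(2πn(2s−1)/N)] / sin²((2s−1)π/N) = 0. -/

import Mathlib

private lemma cos_sum_zero (m k : ℕ) (hm : 1 ≤ m) (hk1 : 1 ≤ k) (hk2 : k ≤ 2*m - 1) :
    ∑ s ∈ Finset.Icc 1 m, Real.cos (2 * Real.pi * k * (2 * (s : ℝ) - 1) / (4*m)) = 0 := by
  have hm0 : (m:ℝ) ≠ 0 := Nat.cast_ne_zero.2 (by omega)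
  set θ : ℝ := Real.pi * k / (2*m) with hθ
  have hθpos : 0 < θ := by
    apply div_pos (by positivity) (by positivity)
  have hθlt : θ < Real.pi := by
    rw [hθ, div_lt_iff₀ (by positivity)]
    have : (k:ℝ) < 2*m := by exact_mod_cast (by omega : k < 2*m)
    nlinarith [Real.pi_pos]
  have hsin : Real.sin θ ≠ 0 := ne_of_gt (Real.sin_pos_of_pos_of_lt_pi hθpos hθlt)
  have harg : ∀ s : ℕ, 2 * Real.pi * k * (2 * (s : ℝ) - 1) / (4*m) = (2 * (s:ℝ) - 1) * θ := by
    intro s; rw [hθ]; field_simp; ring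
  have key : ∑ s ∈ Finset.Icc 1 m,
      (2 * Real.sin θ * Real.cos ((2 * (s:ℝ) - 1) * θ)) = 0 := by
    rw [← Finset.Ico_add_one_right_eq_Icc, Finset.sum_Ico_eq_sum_range]
    have : ∀ i ∈ Finset.range (m + 1 - 1),
        2 * Real.sin θ * Real.cos ((2 * ((1 + i : ℕ) : ℝ) - 1) * θ)
          = (fun j : ℕ => Real.sin (2 * j * θ)) (i+1) - (fun j : ℕ => Real.sin (2 * j * θ)) i := by
      intro i _
      simp only
      rw [show (2 * (((i+1 : ℕ)):ℝ) * θ) = (2 * ((1 + i : ℕ) : ℝ) - 1) * θ + θ by push_cast; ring,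
        show (2 * ((i : ℕ):ℝ) * θ) = (2 * ((1 + i : ℕ) : ℝ) - 1) * θ - θ by push_cast; ring,
        Real.sin_add, Real.sin_sub]
      ring
    rw [Finset.sum_congr rfl this, Finset.sum_range_sub (fun j : ℕ => Real.sin (2 * j * θ))]
    simp only [Nat.add_sub_cancel, Nat.cast_zero]
    rw [show 2 * (m:ℝ) * θ = k * Real.pi by rw [hθ]; field_simp]
    rw [Real.sin_nat_mul_pi]
    norm_num
  rw [← Finset.mul_sum] at key
  rcases mul_eq_zero.1 key with h | h
  · exact absurd h (by positivity)
  · calc ∑ s ∈ Finset.Icc 1 m, Real.cos (2 * Real.pi * k * (2 * (s : ℝ) - 1) / (4*m))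
        = ∑ s ∈ Finset.Icc 1 m, Real.cos ((2 * (s:ℝ) - 1) * θ) :=
          Finset.sum_congr rfl fun s _ => by rw [harg]
      _ = 0 := h

private noncomputable def gSum (m n : ℕ) : ℝ :=
  ∑ s ∈ Finset.Icc 1 m,
    ((4 * (n : ℝ) / (4 * (m:ℝ)) - 1) + Real.cos (2 * Real.pi * n * (2 * (s : ℝ) - 1) / (4 * (m:ℝ)))) /
      Real.sin ((2 * (s : ℝ) - 1) * Real.pi / (4 * (m:ℝ))) ^ 2

private lemma sin_ne (m s : ℕ) (hm : 1 ≤ m) (hs1 : 1 ≤ s) (hs2 : s ≤ m) :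
    Real.sin ((2 * (s : ℝ) - 1) * Real.pi / (4 * (m:ℝ))) ≠ 0 := by
  have h1 : (1:ℝ) ≤ (s:ℝ) := by exact_mod_cast hs1
  have h2 : (s:ℝ) ≤ (m:ℝ) := by exact_mod_cast hs2
  have hm' : (1:ℝ) ≤ (m:ℝ) := by exact_mod_cast hm
  apply ne_of_gt
  apply Real.sin_pos_of_pos_of_lt_pi
  · apply div_pos (by nlinarith [Real.pi_pos]) (by nlinarith)
  · rw [div_lt_iff₀ (by nlinarith)]
    nlinarith [Real.pi_pos]

private lemma gSum_zero (m : ℕ) : gSum m 0 = 0 := by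
  unfold gSum
  apply Finset.sum_eq_zero
  intro s _
  norm_num

private lemma gSum_top (m : ℕ) (hm : 1 ≤ m) : gSum m (2 * m) = 0 := by
  have hm0 : (m:ℝ) ≠ 0 := Nat.cast_ne_zero.2 (by omega)
  unfold gSum
  apply Finset.sum_eq_zero
  intro s _
  have h1 : 4 * ((2*m : ℕ) : ℝ) / (4 * (m:ℝ)) = 2 := by push_cast; field_simp
  have h2 : 2 * Real.pi * ((2*m : ℕ):ℝ) * (2 * (s : ℝ) - 1) / (4 * (m:ℝ))
      = (s:ℝ) * (2 * Real.pi) - Real.pi := by push_cast; field_simp; ring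
  rw [h1, h2, Real.cos_sub_pi, Real.cos_nat_mul_two_pi]
  norm_num

private lemma gSum_rec (m j : ℕ) (hm : 1 ≤ m) (hj : j + 2 ≤ 2*m) :
    gSum m (j+2) + gSum m j = 2 * gSum m (j+1) := by
  have hcos := cos_sum_zero m (j+1) hm (by omega) (by omega)
  have key : gSum m (j+2) + gSum m j - 2 * gSum m (j+1)
      = ∑ s ∈ Finset.Icc 1 m, (-4) * Real.cos (2 * Real.pi * (j+1) * (2 * (s : ℝ) - 1) / (4*(m:ℝ))) := by
    unfold gSum
    rw [← Finset.sum_add_distrib, Finset.mul_sum, ← Finset.sum_sub_distrib]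
    apply Finset.sum_congr rfl
    intro s hs
    obtain ⟨hs1, hs2⟩ := Finset.mem_Icc.1 hs
    have hS := sin_ne m s hm hs1 hs2
    set S := Real.sin ((2 * (s : ℝ) - 1) * Real.pi / (4 * (m:ℝ))) with hSdef
    set x : ℝ := 2 * Real.pi * (2 * (s : ℝ) - 1) / (4 * (m:ℝ)) with hx
    have e2 : 2 * Real.pi * ((j+2 : ℕ):ℝ) * (2 * (s : ℝ) - 1) / (4 * (m:ℝ))
        = 2 * Real.pi * ((j+1:ℕ)) * (2 * (s : ℝ) - 1) / (4*(m:ℝ)) + x := by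
      rw [hx]; push_cast; ring
    have e0 : 2 * Real.pi * ((j : ℕ):ℝ) * (2 * (s : ℝ) - 1) / (4 * (m:ℝ))
        = 2 * Real.pi * ((j+1:ℕ)) * (2 * (s : ℝ) - 1) / (4*(m:ℝ)) - x := by
      rw [hx]; push_cast; ring
    have ecx : Real.cos x = 1 - 2 * S ^ 2 := by
      rw [hx, hSdef, show 2 * Real.pi * (2 * (s : ℝ) - 1) / (4 * (m:ℝ))
        = 2 * ((2 * (s : ℝ) - 1) * Real.pi / (4 * (m:ℝ))) by ring, Real.cos_two_mul]
      have := Real.sin_sq_add_cos_sq ((2 * (s : ℝ) - 1) * Real.pi / (4 * (m:ℝ)))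
      nlinarith
    rw [e2, e0, Real.cos_add, Real.cos_sub, ecx]
    field_simp
    push_cast; ring_nf
  rw [← Finset.mul_sum] at key
  push_cast at hcos
  rw [hcos, mul_zero] at key
  linarith

private lemma gSum_linear (m : ℕ) (hm : 1 ≤ m) :
    ∀ j, j + 1 ≤ 2*m → gSum m j = j * gSum m 1 ∧ gSum m (j+1) = (j+1) * gSum m 1 := by
  intro j
  induction j with
  | zero => intro _; exact ⟨by simpa using gSum_zero m, by norm_num⟩
  | succ j ih =>
    intro h
    obtain ⟨h1, h2⟩ := ih (by omega)
    refine ⟨by push_cast; exact h2, ?_⟩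
    have hr := gSum_rec m j hm (by omega)
    push_cast
    have : gSum m (j + 1 + 1) = 2 * gSum m (j+1) - gSum m j := by
      rw [show j + 1 + 1 = j + 2 from rfl]; linarith
    rw [this, h1, h2]
    ring

private lemma gSum_eq_zero (m n : ℕ) (hm : 1 ≤ m) (hn : n ≤ 2*m - 1) : gSum m n = 0 := by
  have h1 : gSum m 1 = 0 := by
    have := (gSum_linear m hm (2*m - 1) (by omega)).2
    rw [show 2*m - 1 + 1 = 2*m from by omega, gSum_top m hm] at this
    have hne : ((2*m - 1 : ℕ):ℝ) + 1 ≠ 0 := by positivity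
    exact (mul_eq_zero.1 this.symm).resolve_left hne
  have := (gSum_linear m hm n (by omega)).1
  rw [h1, mul_zero] at this
  exact this

theorem sum_identity_odd_relation (N : ℕ) (hN4 : 4 ∣ N) (hN : 4 ≤ N)
    (n : ℕ) (hn : n ≤ N / 2 - 1) :
    ∑ s ∈ Finset.Icc 1 (N / 4),
        ((4 * (n : ℝ) / N - 1) + Real.cos (2 * Real.pi * n * (2 * (s : ℝ) - 1) / N)) /
          Real.sin ((2 * (s : ℝ) - 1) * Real.pi / N) ^ 2
      = 0 := by
  obtain ⟨m, rfl⟩ := hN4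
  have hm : 1 ≤ m := by omega
  have hdiv : 4 * m / 4 = m := by omega
  have hcast : ((4 * m : ℕ) : ℝ) = 4 * (m:ℝ) := by push_cast; ring
  rw [hdiv, hcast]
  have hn' : n ≤ 2*m - 1 := by omega
  exact gSum_eq_zero m n hm hn'
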